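/- arXiv:1008.4819 — 4 statements merged into one kernel-verified Lean document; each statement's English description precedes it below -/
import Mathlib

section
/- Let E be a finite-dimensional real inner product space equipped with Lebesgue measure, let v : E → E be a continuously differentiable vector field whose divergence vanishes identically (trace of the total derivative of v is 0 at every point), and let φ : ℝ × E → E be a flow such that φ(0,·) is the identity, (t,x) ↦ φ(t,x) is continuously differentiable, ∂φ/∂t(t,x) = v(φ(t,x)) for all t and x, and for each t the map φ(t,·) : E → E is a bijection. Then for every measurable set U ⊆ E and every t ∈ ℝ, the Lebesgue measure of φ(t, U) equals the Lebesgue measure of U (Liouville's theorem: volume in phase space is preserved under the flow). -/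
open MeasureTheory Matrix

/-- The determinant as a continuous multilinear map in the rows. -/
noncomputable def detCM (m : ℕ) :
    ContinuousMultilinearMap ℝ (fun _ : Fin m => (Fin m → ℝ)) ℝ :=
  MultilinearMap.mkContinuous
    (Matrix.detRowAlternating : (Fin m → ℝ) [⋀^Fin m]→ₗ[ℝ] ℝ).toMultilinearMap
    (m.factorial) (fun M => by
      have key : ∀ σ : Equiv.Perm (Fin m),
          ‖Equiv.Perm.sign σ • ∏ i, M (σ i) i‖ ≤ ∏ i, ‖M i‖ := by
        intro σ
        have h1 : ‖Equiv.Perm.sign σ • ∏ i, M (σ i) i‖ = ‖∏ i, M (σ i) i‖ := by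
          rcases Int.units_eq_one_or (Equiv.Perm.sign σ) with h | h <;> simp [h]
        rw [h1]
        calc ‖∏ i, M (σ i) i‖ = ∏ i, ‖M (σ i) i‖ := by rw [norm_prod]
          _ ≤ ∏ i, ‖M (σ i)‖ := by
              refine Finset.prod_le_prod (fun i _ => norm_nonneg _) fun i _ => ?_
              exact norm_le_pi_norm (M (σ i)) i
          _ = ∏ i, ‖M i‖ := Equiv.prod_comp σ (fun i => ‖M i‖)
      calc ‖(Matrix.detRowAlternating (R := ℝ) (n := Fin m)).toMultilinearMap M‖
          = ‖∑ σ : Equiv.Perm (Fin m), Equiv.Perm.sign σ • ∏ i, M (σ i) i‖ := by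
            rw [show ((Matrix.detRowAlternating (R := ℝ) (n := Fin m)).toMultilinearMap M : ℝ)
              = Matrix.det (Matrix.of M) from rfl, Matrix.det_apply]; rfl
        _ ≤ ∑ σ : Equiv.Perm (Fin m), ‖Equiv.Perm.sign σ • ∏ i, M (σ i) i‖ := norm_sum_le _ _
        _ ≤ ∑ _σ : Equiv.Perm (Fin m), ∏ i, ‖M i‖ := Finset.sum_le_sum fun σ _ => key σ
        _ = (m.factorial : ℝ) * ∏ i, ‖M i‖ := by
            simp [Finset.sum_const, Fintype.card_perm])

lemma detCM_apply {m : ℕ} (M : Matrix (Fin m) (Fin m) ℝ) :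
    detCM m (fun i => M i) = M.det := rfl

/-- Derivative of the determinant of a matrix-valued path, given row derivatives. -/
lemma hasDerivAt_det {m : ℕ} {M : ℝ → Matrix (Fin m) (Fin m) ℝ}
    {R : Matrix (Fin m) (Fin m) ℝ} {t : ℝ}
    (h : ∀ i, HasDerivAt (fun s => M s i) (R i) t) :
    HasDerivAt (fun s => (M s).det) (∑ i, ((M t).updateRow i (R i)).det) t := by
  have h' : ∀ i, HasFDerivAt (fun s => M s i)
      (ContinuousLinearMap.smulRight (1 : ℝ →L[ℝ] ℝ) (R i)) t := fun i => (h i).hasFDerivAt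
  have key := HasFDerivAt.multilinear_comp (detCM m) h'
  have := key.hasDerivAt
  convert this using 1
  · rfl
  · rfl
  · rfl
  rw [ContinuousLinearMap.sum_apply]
  refine Finset.sum_congr rfl fun i _ => ?_
  simp only [ContinuousLinearMap.comp_apply, ContinuousLinearMap.smulRight_apply,
    ContinuousLinearMap.one_apply, one_smul,
    ContinuousMultilinearMap.toContinuousLinearMap_apply]
  rfl

lemma sum_det_updateRow_mul {m : ℕ} (B M : Matrix (Fin m) (Fin m) ℝ) :
    ∑ i, (M.updateRow i ((B * M) i)).det = B.trace * M.det := by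
  have hrow : ∀ i, (B * M) i = ∑ j, B i j • M j := by
    intro i; ext k; simp [Matrix.mul_apply, Finset.sum_apply]
  calc ∑ i, (M.updateRow i ((B * M) i)).det
      = ∑ i, B i i * M.det := by
        refine Finset.sum_congr rfl fun i _ => ?_
        rw [hrow i, Matrix.det_updateRow_sum, smul_eq_mul]
    _ = B.trace * M.det := by rw [Matrix.trace, Finset.sum_mul]; rfl

/-- **Liouville's theorem.** If `v` is a `C¹` divergence-free vector field
on a finite-dimensional real inner product space `E` (equipped with its Lebesgue measure),
and `φ` is a `C¹` flow for `v` with `φ (0, ·) = id` and each `φ (t, ·)` bijective, then the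
flow preserves the Lebesgue measure of every measurable set. -/
theorem liouville_volume_preserving
    {E : Type*} [NormedAddCommGroup E] [InnerProductSpace ℝ E]
    [FiniteDimensional ℝ E] [MeasurableSpace E] [BorelSpace E]
    (v : E → E) (hv : ContDiff ℝ 1 v)
    (hdiv : ∀ x, LinearMap.trace ℝ E (fderiv ℝ v x).toLinearMap = 0)
    (φ : ℝ × E → E)
    (h0 : ∀ x, φ (0, x) = x)
    (hφ : ContDiff ℝ 1 φ)
    (hflow : ∀ t x, HasDerivAt (fun τ => φ (τ, x)) (v (φ (t, x))) t)
    (hbij : ∀ t : ℝ, Function.Bijective fun x => φ (t, x)) :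
    ∀ U : Set E, MeasurableSet U → ∀ t : ℝ,
      volume ((fun x => φ (t, x)) '' U) = volume U := by
  classical
  have hφd : Differentiable ℝ φ := hφ.differentiable one_ne_zero
  have hvd : Differentiable ℝ v := hv.differentiable one_ne_zero
  set A : ℝ → E → (E →L[ℝ] E) :=
    fun t x => (fderiv ℝ φ (t, x)).comp (ContinuousLinearMap.inr ℝ ℝ E) with hAdef
  have hdφ : ∀ t x, HasFDerivAt (fun y => φ (t, y)) (A t x) x := by
    intro t x
    have h2 : HasFDerivAt (fun y : E => ((t, y) : ℝ × E)) (ContinuousLinearMap.inr ℝ ℝ E) x :=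
      HasFDerivAt.prodMk (hasFDerivAt_const t x) (hasFDerivAt_id x)
    exact (hφd (t, x)).hasFDerivAt.comp x h2
  have hA_cont : Continuous (fun p : ℝ × E => A p.1 p.2) :=
    (hφ.continuous_fderiv one_ne_zero).clm_comp continuous_const
  set G : ℝ → E → (E →L[ℝ] E) :=
    fun s x => (fderiv ℝ v (φ (s, x))).comp (A s x) with hGdef
  have hG_cont : Continuous (fun p : ℝ × E => G p.1 p.2) :=
    (((hv.continuous_fderiv one_ne_zero).comp hφ.continuous)).clm_comp hA_cont
  have hrep : ∀ (t : ℝ) (y : E), φ (t, y) = y + ∫ s in (0:ℝ)..t, v (φ (s, y)) := by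
    intro t y
    have hci : Continuous fun s : ℝ => v (φ (s, y)) :=
      hv.continuous.comp (hφ.continuous.comp (continuous_id.prodMk continuous_const))
    have h := intervalIntegral.integral_eq_sub_of_hasDerivAt
      (f := fun τ => φ (τ, y)) (fun s _ => hflow s y) (hci.intervalIntegrable 0 t)
    rw [h]
    show φ (t, y) = y + (φ (t, y) - φ (0, y))
    rw [h0 y]; abel
  have hdet : ∀ (x : E) (t : ℝ), (A t x).det = 1 := by
    intro x
    -- the integral equation for the space derivative of the flow
    have hInt : ∀ t : ℝ, A t x = ContinuousLinearMap.id ℝ E + ∫ s in (0:ℝ)..t, G s x := by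
      intro t
      obtain ⟨C, hC⟩ :=
        ((isCompact_uIcc (a := (0:ℝ)) (b := t)).prod
          (isCompact_closedBall x 1)).exists_bound_of_continuousOn hG_cont.continuousOn
      have key := intervalIntegral.hasFDerivAt_integral_of_dominated_of_fderiv_le
        (𝕜 := ℝ) (μ := volume) (F := fun y s => v (φ (s, y))) (F' := fun y s => G s y)
        (x₀ := x) (a := 0) (b := t) (bound := fun _ => C) (s := Metric.ball x 1) (Metric.ball_mem_nhds x one_pos)
        (Filter.Eventually.of_forall fun y =>
          (hv.continuous.comp (hφ.continuous.comp
            (continuous_id.prodMk continuous_const))).aestronglyMeasurable)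
        ((hv.continuous.comp (hφ.continuous.comp
            (continuous_id.prodMk continuous_const))).intervalIntegrable 0 t)
        ((hG_cont.comp (continuous_id.prodMk continuous_const)).aestronglyMeasurable)
        (Filter.Eventually.of_forall fun s hs y hy =>
          hC (s, y) ⟨Set.uIoc_subset_uIcc hs, Metric.ball_subset_closedBall hy⟩)
        (intervalIntegrable_const)
        (Filter.Eventually.of_forall fun s _ y _ =>
          (hvd (φ (s, y))).hasFDerivAt.comp y (hdφ s y))
      have hsum : HasFDerivAt (fun y => y + ∫ s in (0:ℝ)..t, v (φ (s, y)))
          (ContinuousLinearMap.id ℝ E + ∫ s in (0:ℝ)..t, G s x) x :=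
        (hasFDerivAt_id x).add key
      have heq : (fun y => φ (t, y)) = fun y => y + ∫ s in (0:ℝ)..t, v (φ (s, y)) :=
        funext fun y => hrep t y
      exact (hdφ t x).unique (heq ▸ hsum)
    -- the linear ODE satisfied by the space derivative
    have hGc : Continuous fun s => G s x :=
      hG_cont.comp (continuous_id.prodMk continuous_const)
    have hA' : ∀ t : ℝ, HasDerivAt (fun τ => A τ x) (G t x) t := by
      intro t
      have h1 : HasDerivAt (fun τ => ∫ s in (0:ℝ)..τ, G s x) (G t x) t :=
        intervalIntegral.integral_hasDerivAt_right (hGc.intervalIntegrable 0 t)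
          hGc.aestronglyMeasurable.stronglyMeasurableAtFilter hGc.continuousAt
      have heq : (fun τ => A τ x)
          = fun τ => ContinuousLinearMap.id ℝ E + ∫ s in (0:ℝ)..τ, G s x := funext hInt
      rw [heq]
      simpa using h1.const_add (ContinuousLinearMap.id ℝ E)
    -- pass to matrices
    set n := Module.finrank ℝ E with hn
    set b : Module.Basis (Fin n) ℝ E := Module.finBasis ℝ E with hb
    set M : ℝ → Matrix (Fin n) (Fin n) ℝ :=
      fun t => LinearMap.toMatrix b b (A t x) with hM
    set Bm : ℝ → Matrix (Fin n) (Fin n) ℝ :=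
      fun t => LinearMap.toMatrix b b (fderiv ℝ v (φ (t, x))) with hBm
    have hMrow : ∀ (t : ℝ) (i : Fin n), HasDerivAt (fun s => M s i) ((Bm t * M t) i) t := by
      intro t i
      set Li : (E →L[ℝ] E) →ₗ[ℝ] (Fin n → ℝ) :=
        (LinearMap.proj i).comp
          ((LinearMap.toMatrix b b).toLinearMap.comp (ContinuousLinearMap.coeLM ℝ)) with hLi
      have h2 := ((LinearMap.toContinuousLinearMap Li).hasFDerivAt).comp_hasDerivAt t (hA' t)
      have hval : ∀ T : E →L[ℝ] E, (LinearMap.toContinuousLinearMap Li) T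
          = (LinearMap.toMatrix b b (T : E →ₗ[ℝ] E)) i := fun T => rfl
      have hGi : (LinearMap.toMatrix b b ((G t x : E →L[ℝ] E) : E →ₗ[ℝ] E)) i
          = (Bm t * M t) i := by
        rw [hGdef]
        show (LinearMap.toMatrix b b
          (((fderiv ℝ v (φ (t, x))).comp (A t x) : E →L[ℝ] E) : E →ₗ[ℝ] E)) i = _
        rw [ContinuousLinearMap.toLinearMap_comp, LinearMap.toMatrix_comp b b b]
      rw [show (LinearMap.toContinuousLinearMap Li) (G t x) = (Bm t * M t) i from hGi] at h2
      exact h2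
    have hdet0 : ∀ t : ℝ, HasDerivAt (fun s => (M s).det) 0 t := by
      intro t
      have h := hasDerivAt_det (M := M) (R := Bm t * M t) (t := t) (hMrow t)
      rw [sum_det_updateRow_mul] at h
      have htr : (Bm t).trace = 0 := by
        rw [hBm]
        rw [← LinearMap.trace_eq_matrix_trace]
        exact hdiv (φ (t, x))
      simpa [htr] using h
    have hconst : ∀ t : ℝ, (M t).det = (M 0).det := fun t =>
      is_const_of_deriv_eq_zero (fun s => (hdet0 s).differentiableAt)
        (fun s => (hdet0 s).deriv) t 0
    have hA0 : A 0 x = ContinuousLinearMap.id ℝ E := by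
      have h1 : HasFDerivAt (fun y => φ (0, y)) (ContinuousLinearMap.id ℝ E) x := by
        have : (fun y : E => φ (0, y)) = fun y => y := funext h0
        rw [this]; exact hasFDerivAt_id x
      exact (hdφ 0 x).unique h1
    intro t
    have hM1 : (M t).det = 1 := by
      rw [hconst t, hM]
      simp [hA0]
    have : (A t x).det = (M t).det := (LinearMap.det_toMatrix b _).symm
    rw [this, hM1]
  -- conclusion via the change of variables formula
  intro U hU t
  have h1 := lintegral_abs_det_fderiv_eq_addHaar_image (μ := volume) hU
    (f' := fun y => A t y) (fun y _ => (hdφ t y).hasFDerivWithinAt)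
    ((hbij t).injective.injOn)
  rw [← h1]
  have : ∀ y : E, ENNReal.ofReal |(A t y).det| = 1 := by
    intro y; rw [hdet y t]; simp
  simp only [this]
  simp
end

section
/- (Strong law of action and reaction.) Consider N particles with masses m_α > 0 and twice differentiable trajectories x_α : ℝ → ℝ³, external forces f_α^{ext}(t) ∈ ℝ³ and interaction force contributions f_{αβ}(t) ∈ ℝ³ for α ≠ β satisfying f_{αβ} = −f_{βα}. Fix a point x₀ ∈ ℝ³. Suppose that at every time t: (i) for every particle α, f_α^{ext} + Σ_{γ≠α} f_{αγ} = m_α ẍ_α; and (ii) for every pair of distinct particles α, β, the balance of angular momentum about x₀ holds for the part {α,β}: (x_α − x₀) × ( f_α^{ext} + Σ_{γ≠α,β} f_{αγ} ) + (x_β − x₀) × ( f_β^{ext} + Σ_{γ≠β,α} f_{βγ} ) = d/dt [ (x_α − x₀) × m_α ẋ_α + (x_β − x₀) × m_β ẋ_β ]. Then (x_α(t) − x_β(t)) × f_{αβ}(t) = 0 for all distinct α, β and all t; that is, each f_{αβ} is parallel to the line joining particles α and β. -/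
lemma hasDerivAt_cross {u v : ℝ → Fin 3 → ℝ} {u' v' : Fin 3 → ℝ} {t : ℝ}
    (hu : HasDerivAt u u' t) (hv : HasDerivAt v v' t) :
    HasDerivAt (fun τ => crossProduct (u τ) (v τ))
      (crossProduct u' (v t) + crossProduct (u t) v') t := by
  have hu' : ∀ j, HasDerivAt (fun τ => u τ j) (u' j) t := fun j => hasDerivAt_pi.1 hu j
  have hv' : ∀ j, HasDerivAt (fun τ => v τ j) (v' j) t := fun j => hasDerivAt_pi.1 hv j
  rw [hasDerivAt_pi]
  intro i
  fin_cases i <;>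
    simp only [cross_apply, Pi.add_apply, Matrix.cons_val_zero, Matrix.cons_val_one,
      Matrix.head_cons, Matrix.cons_val_two, Matrix.tail_cons] <;>
    [ (convert ((hu' 1).mul (hv' 2)).sub ((hu' 2).mul (hv' 1)) using 1; rfl; simp [Matrix.cons_val]; ring);
      (convert ((hu' 2).mul (hv' 0)).sub ((hu' 0).mul (hv' 2)) using 1; rfl; simp [Matrix.cons_val]; ring);
      (convert ((hu' 0).mul (hv' 1)).sub ((hu' 1).mul (hv' 0)) using 1; rfl; simp [Matrix.cons_val]; ring)]

/-- **Strong law of action and reaction.** Given the weak law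
`f_{αβ} = −f_{βα}`, the balance of linear momentum for every single particle, and the
balance of angular momentum about a fixed point `x₀` for every two-particle part, each
interaction force contribution `f_{αβ}` is parallel to the line joining particles `α`
and `β`: `(x_α − x_β) × f_{αβ} = 0`. -/
theorem strong_law_action_reaction
    (N : ℕ) (m : Fin N → ℝ) (hm : ∀ α, 0 < m α)
    (x : Fin N → ℝ → (Fin 3 → ℝ))
    (hx : ∀ α, Differentiable ℝ (x α) ∧ Differentiable ℝ (deriv (x α)))
    (fext : Fin N → ℝ → (Fin 3 → ℝ))
    (fint : Fin N → Fin N → ℝ → (Fin 3 → ℝ))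
    (hweak : ∀ (t : ℝ) (α β : Fin N), α ≠ β → fint α β t = -fint β α t)
    (x₀ : Fin 3 → ℝ)
    (hone : ∀ (t : ℝ) (α : Fin N),
      fext α t + ∑ γ ∈ Finset.univ.erase α, fint α γ t
        = m α • deriv (deriv (x α)) t)
    (hang : ∀ (t : ℝ) (α β : Fin N), α ≠ β →
      crossProduct (x α t - x₀)
          (fext α t + ∑ γ ∈ (Finset.univ.erase α).erase β, fint α γ t)
        + crossProduct (x β t - x₀)
          (fext β t + ∑ γ ∈ (Finset.univ.erase β).erase α, fint β γ t)
        = deriv (fun τ =>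
            crossProduct (x α τ - x₀) (m α • deriv (x α) τ)
              + crossProduct (x β τ - x₀) (m β • deriv (x β) τ)) t) :
    ∀ (t : ℝ) (α β : Fin N), α ≠ β →
      crossProduct (x α t - x β t) (fint α β t) = 0 := by
  intro t α β hab
  have hβα : β ∈ Finset.univ.erase α := Finset.mem_erase.2 ⟨hab.symm, Finset.mem_univ β⟩
  have hαβ : α ∈ Finset.univ.erase β := Finset.mem_erase.2 ⟨hab, Finset.mem_univ α⟩
  have hsumα : (∑ γ ∈ (Finset.univ.erase α).erase β, fint α γ t) + fint α β t
      = ∑ γ ∈ Finset.univ.erase α, fint α γ t := Finset.sum_erase_add _ _ hβα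
  have hsumβ : (∑ γ ∈ (Finset.univ.erase β).erase α, fint β γ t) + fint β α t
      = ∑ γ ∈ Finset.univ.erase β, fint β γ t := Finset.sum_erase_add _ _ hαβ
  have hd : ∀ δ : Fin N, HasDerivAt (fun τ => crossProduct (x δ τ - x₀) (m δ • deriv (x δ) τ))
      (crossProduct (x δ t - x₀) (m δ • deriv (deriv (x δ)) t)) t := by
    intro δ
    have h := hasDerivAt_cross (((hx δ).1 t).hasDerivAt.sub_const x₀)
      (((hx δ).2 t).hasDerivAt.const_smul (m δ))
    simpa [map_smul, cross_self] using h
  have heq := hang t α β hab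
  rw [(show HasDerivAt (fun τ => crossProduct (x α τ - x₀) (m α • deriv (x α) τ)
      + crossProduct (x β τ - x₀) (m β • deriv (x β) τ)) _ t from (hd α).add (hd β)).deriv, ← hone t α, ← hone t β, ← hsumα, ← hsumβ] at heq
  have key : crossProduct (x α t - x₀) (fint α β t)
      + crossProduct (x β t - x₀) (fint β α t) = 0 := by
    have h2 : crossProduct (x α t - x₀) (fint α β t)
        + crossProduct (x β t - x₀) (fint β α t)
      = (crossProduct (x α t - x₀) (fext α t
            + ((∑ γ ∈ (Finset.univ.erase α).erase β, fint α γ t) + fint α β t))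
          + crossProduct (x β t - x₀) (fext β t
            + ((∑ γ ∈ (Finset.univ.erase β).erase α, fint β γ t) + fint β α t)))
        - (crossProduct (x α t - x₀)
            (fext α t + ∑ γ ∈ (Finset.univ.erase α).erase β, fint α γ t)
          + crossProduct (x β t - x₀)
            (fext β t + ∑ γ ∈ (Finset.univ.erase β).erase α, fint β γ t)) := by
      simp only [map_add]; abel
    rw [h2, ← heq, sub_self]
  have hxx : x α t - x β t = (x α t - x₀) - (x β t - x₀) := by ring
  rw [hxx, map_sub, LinearMap.sub_apply]
  rw [hweak t β α hab.symm, map_neg] at key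
  linear_combination key
end

section
/- (The Hardy stress satisfies the pointwise force balance.) Let ι be a finite index set, let x : ι → ℝ³ be particle positions, let f : ι × ι → ℝ³ satisfy f(α,β) = −f(β,α) for α ≠ β, and let w : ℝ³ → ℝ be continuously differentiable. Define the bond function b(x̄; u, v) := ∫₀¹ w((1−s)u + s v − x̄) ds and the Hardy stress field σ(x̄) := (1/2) Σ_{α≠β} [ −f(α,β) ⊗ (x_α − x_β) ] b(x̄; x_α, x_β), a matrix-valued field of x̄ ∈ ℝ³. Then for every x̄ ∈ ℝ³, div σ(x̄) = Σ_{α≠β} w(x_α − x̄) f(α,β). -/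
open MeasureTheory

/-- The divergence of a matrix-valued field `T`, the vector field with components
`(div T)ᵢ = Σⱼ ∂Tᵢⱼ/∂xⱼ`. -/
noncomputable def matDiv (T : (Fin 3 → ℝ) → Matrix (Fin 3) (Fin 3) ℝ)
    (x : Fin 3 → ℝ) : Fin 3 → ℝ :=
  fun i => ∑ j, fderiv ℝ (fun y => T y i j) x (Pi.single j 1)

/-- The bond function `b(xv; u, v) = ∫₀¹ w((1−s)u + sv − xv) ds`. -/
noncomputable def bondFunction (w : (Fin 3 → ℝ) → ℝ) (xb u v : Fin 3 → ℝ) : ℝ :=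
  ∫ s in (0:ℝ)..1, w ((1 - s) • u + s • v - xb)

lemma hasFDerivAt_bond {w : (Fin 3 → ℝ) → ℝ} (hw : ContDiff ℝ 1 w) (u v x₀ : Fin 3 → ℝ) :
    HasFDerivAt (fun y => bondFunction w y u v)
      (∫ s in (0:ℝ)..1, -fderiv ℝ w ((1 - s) • u + s • v - x₀)) x₀ := by
  have hwc : Continuous w := hw.continuous
  have hdw : Continuous (fderiv ℝ w) := hw.continuous_fderiv one_ne_zero
  -- bound on a compact set
  obtain ⟨C, hC⟩ : ∃ C, ∀ p ∈ (Set.Icc (0:ℝ) 1 ×ˢ Metric.closedBall x₀ 1),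
      ‖fderiv ℝ w ((1 - p.1) • u + p.1 • v - p.2)‖ ≤ C := by
    apply ((isCompact_Icc.prod (isCompact_closedBall x₀ 1))).exists_bound_of_continuousOn
    have hG : Continuous (fun p : ℝ × (Fin 3 → ℝ) => (1 - p.1) • u + p.1 • v - p.2) :=
      (((continuous_const.sub continuous_fst).smul continuous_const).add
        (continuous_fst.smul continuous_const)).sub continuous_snd
    exact (hdw.comp hG).continuousOn
  have hdiff : ∀ (t : ℝ) (y : Fin 3 → ℝ),
      HasFDerivAt (fun x => w ((1 - t) • u + t • v - x))
        (-fderiv ℝ w ((1 - t) • u + t • v - y)) y := by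
    intro t y
    have h1 : HasFDerivAt (fun x : Fin 3 → ℝ => (1 - t) • u + t • v - x)
        (-(ContinuousLinearMap.id ℝ (Fin 3 → ℝ))) y := (hasFDerivAt_id y).const_sub _
    have h2 : HasFDerivAt w (fderiv ℝ w ((1 - t) • u + t • v - y)) ((1 - t) • u + t • v - y) :=
      (hw.differentiable one_ne_zero _).hasFDerivAt
    have := h2.comp y h1
    exact this.congr_fderiv (by ext h; simp)
  have hγx : ∀ x : Fin 3 → ℝ, Continuous (fun t : ℝ => (1 - t) • u + t • v - x) := fun x =>
    (((continuous_const.sub continuous_id).smul continuous_const).add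
      (continuous_id.smul continuous_const)).sub continuous_const
  simp only [bondFunction]
  apply hasFDerivAt_integral_of_dominated_of_fderiv_le''
    (F := fun x t => w ((1 - t) • u + t • v - x))
    (F' := fun x t => -fderiv ℝ w ((1 - t) • u + t • v - x))
    (bound := fun _ => C) (Metric.ball_mem_nhds x₀ one_pos)
  · filter_upwards with x
    exact ((hwc.comp (hγx x)).aestronglyMeasurable)
  · exact (hwc.comp (hγx x₀)).intervalIntegrable 0 1
  · exact ((hdw.comp (hγx x₀)).neg.aestronglyMeasurable)
  · filter_upwards [ae_restrict_mem measurableSet_uIoc] with t ht x hx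
    rw [norm_neg]
    apply hC (t, x)
    rw [Set.uIoc_of_le (by norm_num : (0:ℝ) ≤ 1)] at ht
    exact ⟨Set.Ioc_subset_Icc_self ht, Metric.ball_subset_closedBall hx⟩
  · exact intervalIntegrable_const
  · filter_upwards with t x _
    exact hdiff t x

lemma bond_fderiv_apply {w : (Fin 3 → ℝ) → ℝ} (hw : ContDiff ℝ 1 w) (u v x₀ : Fin 3 → ℝ) :
    (∫ s in (0:ℝ)..1, -fderiv ℝ w ((1 - s) • u + s • v - x₀)) (u - v)
      = w (v - x₀) - w (u - x₀) := by
  have hdw : Continuous (fderiv ℝ w) := hw.continuous_fderiv one_ne_zero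
  have hγ : Continuous (fun s : ℝ => (1 - s) • u + s • v - x₀) :=
    (((continuous_const.sub continuous_id).smul continuous_const).add
      (continuous_id.smul continuous_const)).sub continuous_const
  have hφ : IntervalIntegrable (fun s : ℝ => -fderiv ℝ w ((1 - s) • u + s • v - x₀))
      MeasureTheory.volume 0 1 := ((hdw.comp hγ).neg.intervalIntegrable 0 1)
  rw [ContinuousLinearMap.intervalIntegral_apply hφ]
  have key : ∀ s : ℝ, HasDerivAt (fun s : ℝ => w ((1 - s) • u + s • v - x₀))
      ((fderiv ℝ w ((1 - s) • u + s • v - x₀)) (v - u)) s := by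
    intro s
    have hc : HasDerivAt (fun s : ℝ => (1 - s) • u + s • v - x₀) (v - u) s := by
      have h1 : HasDerivAt (fun s : ℝ => (1 - s)) (-1) s := by
        simpa using ((hasDerivAt_id s).const_sub 1)
      have h2 := (h1.smul_const u).add ((hasDerivAt_id s).smul_const v)
      have h3 := h2.sub_const x₀
      exact h3.congr_deriv (by simp [neg_smul, sub_eq_neg_add])
    exact ((hw.differentiable one_ne_zero _).hasFDerivAt).comp_hasDerivAt s hc
  have hint : IntervalIntegrable
      (fun s : ℝ => (fderiv ℝ w ((1 - s) • u + s • v - x₀)) (v - u)) MeasureTheory.volume 0 1 :=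
    ((hdw.comp hγ).clm_apply continuous_const).intervalIntegrable 0 1
  have ftc := intervalIntegral.integral_eq_sub_of_hasDerivAt (f := fun s : ℝ => w ((1 - s) • u + s • v - x₀))
      (fun s _ => key s) hint
  have : ∀ s : ℝ, (-fderiv ℝ w ((1 - s) • u + s • v - x₀)) (u - v)
      = (fderiv ℝ w ((1 - s) • u + s • v - x₀)) (v - u) := by
    intro s
    rw [ContinuousLinearMap.neg_apply, ← map_neg, neg_sub]
  simp_rw [this]
  rw [ftc]
  norm_num


lemma clm_sum_single (L : (Fin 3 → ℝ) →L[ℝ] ℝ) (g : Fin 3 → ℝ) :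
    ∑ j, g j * L (Pi.single j 1) = L g := by
  conv_rhs => rw [← Finset.univ_sum_single g]
  rw [map_sum]
  refine Finset.sum_congr rfl fun j _ => ?_
  have h1 : (Pi.single j (g j) : Fin 3 → ℝ) = g j • (Pi.single j 1 : Fin 3 → ℝ) := by
    funext k
    by_cases h : k = j <;> simp [Pi.single_apply, h]
  rw [h1, _root_.map_smul, smul_eq_mul]

/-- **The Hardy stress satisfies the pointwise force balance.**
For antisymmetric interaction forces `f` and a `C¹` weighting function `w`, the Hardy
stress field `σ(x̄) = (1/2) Σ_{α≠β} [−f(α,β) ⊗ (x_α − x_β)] b(xv; x_α, x_β)` satisfies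
`div σ(x̄) = Σ_{α≠β} w(x_α − xv) f(α,β)` at every point `xv`. -/
theorem hardy_stress_force_balance
    {ι : Type*} [Fintype ι] [DecidableEq ι]
    (x : ι → (Fin 3 → ℝ)) (f : ι × ι → (Fin 3 → ℝ))
    (hanti : ∀ α β, α ≠ β → f (α, β) = -f (β, α))
    (w : (Fin 3 → ℝ) → ℝ) (hw : ContDiff ℝ 1 w) :
    ∀ xb : Fin 3 → ℝ,
      matDiv (fun xv => (1 / 2 : ℝ) •
          ∑ α, ∑ β ∈ Finset.univ.erase α,
            bondFunction w xv (x α) (x β) • Matrix.vecMulVec (-f (α, β)) (x α - x β)) xb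
        = ∑ α, ∑ β ∈ Finset.univ.erase α, w (x α - xb) • f (α, β) := by
  intro xb
  set L : ι → ι → (Fin 3 → ℝ) →L[ℝ] ℝ := fun α β =>
    ∫ s in (0:ℝ)..1, -fderiv ℝ w ((1 - s) • (x α) + s • (x β) - xb) with hLdef
  have hL : ∀ α β, HasFDerivAt (fun y => bondFunction w y (x α) (x β)) (L α β) xb :=
    fun α β => hasFDerivAt_bond hw (x α) (x β) xb
  have hLval : ∀ α β, L α β (x α - x β) = w (x β - xb) - w (x α - xb) :=
    fun α β => bond_fderiv_apply hw (x α) (x β) xb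
  funext i
  -- compute each partial derivative
  have hder : ∀ j : Fin 3,
      fderiv ℝ (fun y => ((1 / 2 : ℝ) •
          ∑ α, ∑ β ∈ Finset.univ.erase α,
            bondFunction w y (x α) (x β) • Matrix.vecMulVec (-f (α, β)) (x α - x β)) i j) xb
        = (1 / 2 : ℝ) • ∑ α, ∑ β ∈ Finset.univ.erase α,
            ((-f (α, β)) i * (x α - x β) j) • L α β := by
    intro j
    have h : HasFDerivAt (fun y => ((1 / 2 : ℝ) •
          ∑ α, ∑ β ∈ Finset.univ.erase α,
            bondFunction w y (x α) (x β) • Matrix.vecMulVec (-f (α, β)) (x α - x β)) i j)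
        ((1 / 2 : ℝ) • ∑ α, ∑ β ∈ Finset.univ.erase α,
            ((-f (α, β)) i * (x α - x β) j) • L α β) xb := by
      simp only [Matrix.smul_apply, Matrix.sum_apply, Matrix.vecMulVec_apply, smul_eq_mul]
      apply HasFDerivAt.const_mul
      apply HasFDerivAt.fun_sum
      intro α _
      apply HasFDerivAt.fun_sum
      intro β _
      exact (hL α β).mul_const ((-f (α, β)) i * (x α - x β) j)
    exact h.fderiv
  simp only [matDiv, hder]
  -- evaluate and exchange sums
  have step1 : ∀ j : Fin 3,
      ((1 / 2 : ℝ) • ∑ α, ∑ β ∈ Finset.univ.erase α,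
          ((-f (α, β)) i * (x α - x β) j) • L α β) (Pi.single j 1)
        = (1 / 2 : ℝ) * ∑ α, ∑ β ∈ Finset.univ.erase α,
            (-f (α, β)) i * ((x α - x β) j * (L α β) (Pi.single j 1)) := by
    intro j
    simp [ContinuousLinearMap.sum_apply, mul_assoc]
  simp only [step1]
  rw [← Finset.mul_sum]
  rw [Finset.sum_comm]
  have step2 : ∑ α, ∑ j : Fin 3, ∑ β ∈ Finset.univ.erase α,
      (-f (α, β)) i * ((x α - x β) j * (L α β) (Pi.single j 1))
      = ∑ α, ∑ β ∈ Finset.univ.erase α,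
        (-f (α, β)) i * (w (x β - xb) - w (x α - xb)) := by
    refine Finset.sum_congr rfl fun α _ => ?_
    rw [Finset.sum_comm]
    refine Finset.sum_congr rfl fun β _ => ?_
    rw [← Finset.mul_sum, clm_sum_single (L α β) (x α - x β), hLval α β]
  rw [step2]
  -- algebra with antisymmetry
  have hswap : ∑ α, ∑ β ∈ Finset.univ.erase α, f (α, β) i * w (x β - xb)
      = -(∑ α, ∑ β ∈ Finset.univ.erase α, f (α, β) i * w (x α - xb)) := by
    rw [Finset.sum_comm' (s := Finset.univ) (t := fun a => Finset.univ.erase a)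
      (t' := Finset.univ) (s' := fun b => Finset.univ.erase b)
      (fun a b => by simp [Finset.mem_erase, and_comm, ne_comm])]
    rw [← Finset.sum_neg_distrib]
    refine Finset.sum_congr rfl fun β _ => ?_
    rw [← Finset.sum_neg_distrib]
    refine Finset.sum_congr rfl fun α hα => ?_
    rw [hanti α β (Finset.ne_of_mem_erase hα)]
    simp
  have expand : ∑ α, ∑ β ∈ Finset.univ.erase α,
      (-f (α, β)) i * (w (x β - xb) - w (x α - xb))
      = (∑ α, ∑ β ∈ Finset.univ.erase α, f (α, β) i * w (x α - xb))
        - ∑ α, ∑ β ∈ Finset.univ.erase α, f (α, β) i * w (x β - xb) := by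
    rw [← Finset.sum_sub_distrib]
    refine Finset.sum_congr rfl fun α _ => ?_
    rw [← Finset.sum_sub_distrib]
    refine Finset.sum_congr rfl fun β _ => ?_
    simp only [Pi.neg_apply]
    ring
  rw [expand, hswap]
  have rhs : (∑ α, ∑ β ∈ Finset.univ.erase α, w (x α - xb) • f (α, β)) i
      = ∑ α, ∑ β ∈ Finset.univ.erase α, f (α, β) i * w (x α - xb) := by
    simp [Finset.sum_apply, mul_comm]
  rw [rhs]
  ring
end

section
/- (Continuity equation for the Murdoch–Hardy spatially averaged fields.) Let ι be a finite index set, m_α > 0 masses, x_α : ℝ → ℝ³ continuously differentiable particle trajectories with velocities v_α = ẋ_α, and let w : ℝ³ → ℝ be continuously differentiable. Define the smeared density ρ̃(x,t) := Σ_α m_α w(x_α(t) − x) and the smeared momentum density p̃(x,t) := Σ_α m_α v_α(t) w(x_α(t) − x). Then at every (x,t), ∂ρ̃/∂t (x,t) + div_x p̃ (x,t) = 0. -/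
/-- **Continuity equation for the Murdoch–Hardy spatially averaged
fields.** For `C¹` particle trajectories `x_α` with masses `m_α > 0` and a `C¹`
weighting function `w`, the smeared density `ρ̃(x,t) = Σ_α m_α w(x_α(t) − x)` and
smeared momentum density `p̃(x,t) = Σ_α m_α v_α(t) w(x_α(t) − x)` satisfy
`∂ρ̃/∂t + div_x p̃ = 0` at every point and time. -/
theorem murdoch_hardy_continuity_equation
    {ι : Type*} [Fintype ι]
    (m : ι → ℝ) (hm : ∀ α, 0 < m α)
    (x : ι → ℝ → (Fin 3 → ℝ)) (hx : ∀ α, ContDiff ℝ 1 (x α))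
    (w : (Fin 3 → ℝ) → ℝ) (hw : ContDiff ℝ 1 w) :
    ∀ (xv : Fin 3 → ℝ) (t : ℝ),
      deriv (fun τ => ∑ α, m α * w (x α τ - xv)) t
        + ∑ j : Fin 3, fderiv ℝ
            (fun y => ∑ α, m α * deriv (x α) t j * w (x α t - y)) xv (Pi.single j 1)
        = 0 := by
  intro xv t
  have hw' : Differentiable ℝ w := hw.differentiable one_ne_zero
  have hx' : ∀ α, Differentiable ℝ (x α) := fun α => (hx α).differentiable one_ne_zero
  -- time derivative
  have hsum : HasDerivAt (fun τ => ∑ α, m α * w (x α τ - xv))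
      (∑ α, m α * (fderiv ℝ w (x α t - xv)) (deriv (x α) t)) t := by
    apply HasDerivAt.fun_sum
    intro α _
    have h1 : HasDerivAt (fun τ => x α τ - xv) (deriv (x α) t) t := by
      simpa using ((hx' α t).hasDerivAt.sub_const xv)
    exact ((hw' _).hasFDerivAt.comp_hasDerivAt t h1).const_mul (m α)
  rw [hsum.deriv]
  -- spatial derivative
  have hspace : ∀ j : Fin 3,
      fderiv ℝ (fun y => ∑ α, m α * deriv (x α) t j * w (x α t - y)) xv (Pi.single j 1)
      = ∑ α, -(m α * deriv (x α) t j * (fderiv ℝ w (x α t - xv)) (Pi.single j 1)) := by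
    intro j
    have hF : HasFDerivAt (fun y => ∑ α, m α * deriv (x α) t j * w (x α t - y))
        (∑ α, (m α * deriv (x α) t j) •
          ((fderiv ℝ w (x α t - xv)).comp (-(ContinuousLinearMap.id ℝ (Fin 3 → ℝ))))) xv := by
      apply HasFDerivAt.fun_sum
      intro α _
      have h1 : HasFDerivAt (fun y : Fin 3 → ℝ => x α t - y)
          (-(ContinuousLinearMap.id ℝ (Fin 3 → ℝ))) xv := by
        simpa using ((hasFDerivAt_id (𝕜 := ℝ) xv).const_sub (x α t))
      exact ((hw' (x α t - xv)).hasFDerivAt.comp xv h1).const_mul (m α * deriv (x α) t j)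
    rw [hF.fderiv, ContinuousLinearMap.sum_apply]
    refine Finset.sum_congr rfl fun α _ => ?_
    simp [mul_comm]
  rw [Finset.sum_congr rfl (fun j _ => hspace j), Finset.sum_comm]
  rw [← Finset.sum_add_distrib]
  apply Finset.sum_eq_zero
  intro α _
  have hv : deriv (x α) t = ∑ j : Fin 3, deriv (x α) t j • (Pi.single j (1:ℝ) : Fin 3 → ℝ) := by
    ext k
    simp [Finset.sum_apply, Pi.single_apply]
  rw [hv, map_sum]
  simp [Finset.mul_sum, Pi.single_apply, mul_ite, ite_mul, Finset.sum_ite_eq, Finset.sum_ite_eq', mul_comm, mul_assoc, mul_left_comm]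
end
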